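/- Let d, d' ≥ 1 and let M be a d' × d real matrix with all entries strictly positive. Define a(M) := max over indices i,j ∈ Fin d', k,l ∈ Fin d of (M_{ik}·M_{jl})/(M_{jk}·M_{il}), and the contraction ratio κ(M) := (√a(M) − 1)/(√a(M) + 1). Then for all vectors p, q : Fin d → ℝ with strictly positive coordinates, ρ_BG(M·p, M·q) ≤ κ(M) · ρ_BG(p, q) (Birkhoff–Samelson contraction theorem). -/

import Mathlib

open Finset

/-- Variation seminorm `‖x‖_var = (max_i x_i) - (min_i x_i)`. -/
noncomputable def varNorm {n : ℕ} [NeZero n] (x : Fin n → ℝ) : ℝ :=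
  univ.sup' univ_nonempty x - univ.inf' univ_nonempty x

/-- Birkhoff projective metric `ρ_BG(p,q) = ‖log p − log q‖_var`. -/
noncomputable def rhoBG {n : ℕ} [NeZero n] (p q : Fin n → ℝ) : ℝ :=
  varNorm (fun i => Real.log (p i) - Real.log (q i))

/-- `a(M) = max_{i,j,k,l} (M_{ik} M_{jl}) / (M_{jk} M_{il})` for a positive matrix. -/
noncomputable def birkhoffA {d' d : ℕ} [NeZero d'] [NeZero d]
    (M : Matrix (Fin d') (Fin d) ℝ) : ℝ :=
  (univ : Finset ((Fin d' × Fin d') × Fin d × Fin d)).sup' univ_nonempty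
    (fun x => (M x.1.1 x.2.1 * M x.1.2 x.2.2) / (M x.1.2 x.2.1 * M x.1.1 x.2.2))

/-- Birkhoff's contraction ratio `κ(M) = (√a(M) − 1)/(√a(M) + 1)`. -/
noncomputable def birkhoffKappa {d' d : ℕ} [NeZero d'] [NeZero d]
    (M : Matrix (Fin d') (Fin d) ℝ) : ℝ :=
  (Real.sqrt (birkhoffA M) - 1) / (Real.sqrt (birkhoffA M) + 1)


lemma keyIneq (A S T : ℝ) (hA : 1 ≤ A) (hS0 : 0 ≤ S) (hS1 : S ≤ 1) (hT0 : 0 ≤ T) (hT1 : T ≤ 1)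
    (h : S * (1 - T) ≤ A^2 * (T * (1 - S))) : S - T ≤ (A - 1)/(A + 1) := by
  have hA2 : (0:ℝ) ≤ A^2 - 1 := by nlinarith
  rw [le_div_iff₀ (by linarith)]
  have hD : (1:ℝ) ≤ A^2 - (A^2-1)*S := by nlinarith [mul_nonneg hA2 (sub_nonneg.2 hS1)]
  have h1 : (S - T) * (A^2 - (A^2-1)*S) ≤ (A^2-1)*(S*(1-S)) := by nlinarith
  have h2 : (A^2-1)*(S*(1-S))*(A+1) ≤ (A-1)*(A^2-(A^2-1)*S) := by
    nlinarith [mul_nonneg (sub_nonneg.2 hA) (sq_nonneg ((A+1)*S-A))]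
  have h3 : (S - T) * (A+1) * (A^2-(A^2-1)*S) ≤ (A-1) * (A^2-(A^2-1)*S) := by nlinarith
  exact le_of_mul_le_mul_right h3 (by linarith)

lemma tvBound {d : ℕ} [NeZero d] (A β : ℝ) (hA : 1 ≤ A) (hβ : 0 ≤ β)
    (s t z : Fin d → ℝ) (hs : ∀ k, 0 < s k) (ht : ∀ k, 0 < t k)
    (hz0 : ∀ k, 0 ≤ z k) (hzβ : ∀ k, z k ≤ β)
    (hc : ∀ k l, s k * t l ≤ A^2 * (t k * s l)) :
    (∑ k, s k * z k)/(∑ k, s k) - (∑ k, t k * z k)/(∑ k, t k) ≤ (A-1)/(A+1) * β := by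
  classical
  have hSs : 0 < ∑ k, s k := Finset.sum_pos (fun k _ => hs k) Finset.univ_nonempty
  have hTs : 0 < ∑ k, t k := Finset.sum_pos (fun k _ => ht k) Finset.univ_nonempty
  set Ss := ∑ k, s k with hSsdef
  set Ts := ∑ k, t k with hTsdef
  set pr : Fin d → Prop := fun k => t k * Ss ≤ s k * Ts with hpr
  set P : Finset (Fin d) := Finset.univ.filter pr with hP
  set Q : Finset (Fin d) := Finset.univ.filter (fun k => ¬ pr k) with hQ
  have hsplitS : (∑ k ∈ P, s k) + (∑ k ∈ Q, s k) = Ss :=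
    Finset.sum_filter_add_sum_filter_not _ _ _
  have hsplitT : (∑ k ∈ P, t k) + (∑ k ∈ Q, t k) = Ts :=
    Finset.sum_filter_add_sum_filter_not _ _ _
  have hSP0 : 0 ≤ ∑ k ∈ P, s k := Finset.sum_nonneg fun k _ => (hs k).le
  have hTP0 : 0 ≤ ∑ k ∈ P, t k := Finset.sum_nonneg fun k _ => (ht k).le
  have hSQ0 : 0 ≤ ∑ k ∈ Q, s k := Finset.sum_nonneg fun k _ => (hs k).le
  have hTQ0 : 0 ≤ ∑ k ∈ Q, t k := Finset.sum_nonneg fun k _ => (ht k).le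
  have key : (∑ k ∈ P, s k) * (∑ l ∈ Q, t l) ≤ A^2 * ((∑ k ∈ P, t k) * (∑ l ∈ Q, s l)) := by
    rw [Finset.sum_mul_sum, Finset.sum_mul_sum, Finset.mul_sum]
    refine Finset.sum_le_sum fun k _ => ?_
    rw [Finset.mul_sum]
    exact Finset.sum_le_sum fun l _ => hc k l
  -- the key inequality in normalized form
  have hkey2 : (∑ k ∈ P, s k)/Ss - (∑ k ∈ P, t k)/Ts ≤ (A-1)/(A+1) := by
    apply keyIneq A _ _ hA (div_nonneg hSP0 hSs.le)
      ((div_le_one hSs).2 (by linarith)) (div_nonneg hTP0 hTs.le)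
      ((div_le_one hTs).2 (by linarith))
    have e1 : (1:ℝ) - (∑ k ∈ P, t k)/Ts = (∑ k ∈ Q, t k)/Ts := by
      field_simp
      linarith
    have e2 : (1:ℝ) - (∑ k ∈ P, s k)/Ss = (∑ k ∈ Q, s k)/Ss := by
      field_simp
      linarith
    rw [e1, e2, div_mul_div_comm, div_mul_div_comm, ← mul_div_assoc, mul_comm Ts Ss]
    exact (div_le_div_iff_of_pos_right (by positivity)).2 key
  calc (∑ k, s k * z k)/Ss - (∑ k, t k * z k)/Ts
      = ∑ k, (s k/Ss - t k/Ts) * z k := by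
        rw [Finset.sum_div, Finset.sum_div, ← Finset.sum_sub_distrib]
        exact Finset.sum_congr rfl fun k _ => by ring
    _ = (∑ k ∈ P, (s k/Ss - t k/Ts) * z k) + (∑ k ∈ Q, (s k/Ss - t k/Ts) * z k) :=
        (Finset.sum_filter_add_sum_filter_not _ _ _).symm
    _ ≤ (∑ k ∈ P, (s k/Ss - t k/Ts) * β) + 0 := by
        apply add_le_add
        · refine Finset.sum_le_sum fun k hk => ?_
          have hk' : pr k := (Finset.mem_filter.1 hk).2
          have hfac : 0 ≤ s k/Ss - t k/Ts := by
            rw [sub_nonneg, div_le_div_iff₀ hTs hSs]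
            exact hk'
          exact mul_le_mul_of_nonneg_left (hzβ k) hfac
        · refine Finset.sum_nonpos fun k hk => ?_
          have hk' : ¬ pr k := (Finset.mem_filter.1 hk).2
          have hfac : s k/Ss - t k/Ts ≤ 0 := by
            rw [sub_nonpos, div_le_div_iff₀ hSs hTs]
            exact (le_of_lt (lt_of_not_ge hk'))
          exact mul_nonpos_of_nonpos_of_nonneg hfac (hz0 k)
    _ = ((∑ k ∈ P, s k)/Ss - (∑ k ∈ P, t k)/Ts) * β := by
        rw [add_zero, ← Finset.sum_mul, Finset.sum_sub_distrib, Finset.sum_div, Finset.sum_div]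
    _ ≤ (A-1)/(A+1) * β := mul_le_mul_of_nonneg_right hkey2 hβ

lemma phiBound {d : ℕ} [NeZero d] (A β : ℝ) (hA : 1 ≤ A) (hβ : 0 ≤ β)
    (s t z : Fin d → ℝ) (hs : ∀ k, 0 < s k) (ht : ∀ k, 0 < t k)
    (hz0 : ∀ k, 0 ≤ z k) (hzβ : ∀ k, z k ≤ β)
    (hc : ∀ k l, s k * t l ≤ A^2 * (t k * s l)) :
    Real.log (∑ k, s k * Real.exp (z k)) - Real.log (∑ k, t k * Real.exp (z k))
      - (Real.log (∑ k, s k) - Real.log (∑ k, t k)) ≤ (A-1)/(A+1) * β := by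
  classical
  set φ : ℝ → ℝ := fun x =>
    Real.log (∑ k, s k * Real.exp (x * z k)) - Real.log (∑ k, t k * Real.exp (x * z k)) with hφ
  set φ' : ℝ → ℝ := fun x =>
    (∑ k, s k * (Real.exp (x * z k) * z k)) / (∑ k, s k * Real.exp (x * z k))
      - (∑ k, t k * (Real.exp (x * z k) * z k)) / (∑ k, t k * Real.exp (x * z k)) with hφ'
  have hposS : ∀ x : ℝ, 0 < ∑ k, s k * Real.exp (x * z k) := fun x =>
    Finset.sum_pos (fun k _ => mul_pos (hs k) (Real.exp_pos _)) Finset.univ_nonempty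
  have hposT : ∀ x : ℝ, 0 < ∑ k, t k * Real.exp (x * z k) := fun x =>
    Finset.sum_pos (fun k _ => mul_pos (ht k) (Real.exp_pos _)) Finset.univ_nonempty
  have hderiv : ∀ x : ℝ, HasDerivAt φ (φ' x) x := by
    intro x
    have hS : HasDerivAt (fun x => ∑ k, s k * Real.exp (x * z k))
        (∑ k, s k * (Real.exp (x * z k) * z k)) x :=
      HasDerivAt.fun_sum fun k _ => ((hasDerivAt_mul_const (z k)).exp.const_mul (s k))
    have hT : HasDerivAt (fun x => ∑ k, t k * Real.exp (x * z k))
        (∑ k, t k * (Real.exp (x * z k) * z k)) x :=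
      HasDerivAt.fun_sum fun k _ => ((hasDerivAt_mul_const (z k)).exp.const_mul (t k))
    exact (hS.log (hposS x).ne').sub (hT.log (hposT x).ne')
  have hbound : ∀ x : ℝ, |φ' x| ≤ (A-1)/(A+1) * β := by
    intro x
    have hcs : ∀ (u v : Fin d → ℝ), (∀ k l, u k * v l ≤ A^2 * (v k * u l)) →
        ∀ k l, (u k * Real.exp (x * z k)) * (v l * Real.exp (x * z l)) ≤
          A^2 * ((v k * Real.exp (x * z k)) * (u l * Real.exp (x * z l))) := by
      intro u v huv k l
      calc (u k * Real.exp (x * z k)) * (v l * Real.exp (x * z l))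
          = (u k * v l) * (Real.exp (x * z k) * Real.exp (x * z l)) := by ring
        _ ≤ (A^2 * (v k * u l)) * (Real.exp (x * z k) * Real.exp (x * z l)) :=
            mul_le_mul_of_nonneg_right (huv k l) (by positivity)
        _ = A^2 * ((v k * Real.exp (x * z k)) * (u l * Real.exp (x * z l))) := by ring
    have hsumeq : ∀ (u : Fin d → ℝ),
        (∑ k, u k * (Real.exp (x * z k) * z k)) = ∑ k, (u k * Real.exp (x * z k)) * z k :=
      fun u => Finset.sum_congr rfl fun k _ => by ring
    rw [abs_le]
    constructor
    · have := tvBound A β hA hβ (fun k => t k * Real.exp (x * z k))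
        (fun k => s k * Real.exp (x * z k)) z
        (fun k => mul_pos (ht k) (Real.exp_pos _)) (fun k => mul_pos (hs k) (Real.exp_pos _))
        hz0 hzβ (hcs t s fun k l => by
          calc t k * s l = s l * t k := by ring
            _ ≤ A^2 * (t l * s k) := hc l k
            _ = A^2 * (s k * t l) := by ring)
      rw [hφ']
      simp only [hsumeq s, hsumeq t] at *
      linarith
    · have := tvBound A β hA hβ (fun k => s k * Real.exp (x * z k))
        (fun k => t k * Real.exp (x * z k)) z
        (fun k => mul_pos (hs k) (Real.exp_pos _)) (fun k => mul_pos (ht k) (Real.exp_pos _))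
        hz0 hzβ (hcs s t hc)
      rw [hφ']
      simp only [hsumeq s, hsumeq t] at *
      linarith
  have hnorm : ‖φ 1 - φ 0‖ ≤ (A-1)/(A+1) * β * ‖(1:ℝ) - 0‖ := by
    apply Convex.norm_image_sub_le_of_norm_hasDerivWithin_le
      (fun x _ => (hderiv x).hasDerivWithinAt)
      (fun x _ => by rw [Real.norm_eq_abs]; exact hbound x)
      (convex_Icc (0:ℝ) 1) (Set.left_mem_Icc.2 zero_le_one) (Set.right_mem_Icc.2 zero_le_one)
  have h10 : φ 1 - φ 0 ≤ (A-1)/(A+1) * β := by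
    have := (abs_le.1 (by rwa [Real.norm_eq_abs] at hnorm ; )).2
    simpa using this
  have e1 : φ 1 = Real.log (∑ k, s k * Real.exp (z k)) - Real.log (∑ k, t k * Real.exp (z k)) := by
    simp [hφ]
  have e0 : φ 0 = Real.log (∑ k, s k) - Real.log (∑ k, t k) := by
    simp [hφ]
  rw [← e1, ← e0]
  exact h10

/-- Birkhoff–Samelson contraction theorem: a positive linear map contracts the
Birkhoff projective metric by the factor `κ(M)`. -/
theorem birkhoff_contraction (d d' : ℕ) [NeZero d] [NeZero d']
    (M : Matrix (Fin d') (Fin d) ℝ) (hM : ∀ i j, 0 < M i j)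
    (p q : Fin d → ℝ) (hp : ∀ i, 0 < p i) (hq : ∀ i, 0 < q i) :
    rhoBG (M.mulVec p) (M.mulVec q) ≤ birkhoffKappa M * rhoBG p q := by
  classical
  set a := birkhoffA M with hadef
  have ha1 : (1:ℝ) ≤ a := by
    have := Finset.le_sup' (s := (univ : Finset ((Fin d' × Fin d') × Fin d × Fin d)))
      (fun x => (M x.1.1 x.2.1 * M x.1.2 x.2.2) / (M x.1.2 x.2.1 * M x.1.1 x.2.2))
      (b := (((0:Fin d'),(0:Fin d')),((0:Fin d),(0:Fin d)))) (mem_univ _)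
    rw [hadef, birkhoffA]
    refine le_trans ?_ this
    rw [div_self (mul_pos (hM 0 0) (hM 0 0)).ne']
  set A := Real.sqrt a with hAdef
  have hA : 1 ≤ A := by
    rw [hAdef, show (1:ℝ) = Real.sqrt 1 from (Real.sqrt_one).symm]
    exact Real.sqrt_le_sqrt ha1
  have hA2 : A^2 = a := Real.sq_sqrt (by linarith)
  set g : Fin d → ℝ := fun k => Real.log (p k) - Real.log (q k) with hg
  set c : ℝ := univ.inf' univ_nonempty g with hc
  set β : ℝ := rhoBG p q with hβdef
  have hβeq : β = univ.sup' univ_nonempty g - c := rfl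
  have hβ : 0 ≤ β := by
    rw [hβeq]
    have h1 : c ≤ g 0 := Finset.inf'_le _ (mem_univ 0)
    have h2 : g 0 ≤ univ.sup' univ_nonempty g := Finset.le_sup' _ (mem_univ 0)
    linarith
  set z : Fin d → ℝ := fun k => g k - c with hz
  have hz0 : ∀ k, 0 ≤ z k := fun k => sub_nonneg.2 (Finset.inf'_le _ (mem_univ k))
  have hzβ : ∀ k, z k ≤ β := fun k => by
    rw [hβeq]; exact sub_le_sub_right (Finset.le_sup' _ (mem_univ k)) c
  set f : Fin d' → ℝ := fun i => Real.log (M.mulVec p i) - Real.log (M.mulVec q i) with hf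
  have hMp : ∀ i, 0 < M.mulVec p i := fun i =>
    Finset.sum_pos (fun k _ => mul_pos (hM i k) (hp k)) Finset.univ_nonempty
  have hMq : ∀ i, 0 < M.mulVec q i := fun i =>
    Finset.sum_pos (fun k _ => mul_pos (hM i k) (hq k)) Finset.univ_nonempty
  have claim : ∀ i j, f i - f j ≤ (A-1)/(A+1) * β := by
    intro i j
    have hcon : ∀ k l, (M i k * q k) * (M j l * q l) ≤ A^2 * ((M j k * q k) * (M i l * q l)) := by
      intro k l
      have h1 : (M i k * M j l) / (M j k * M i l) ≤ a :=
        Finset.le_sup' (s := (univ : Finset ((Fin d' × Fin d') × Fin d × Fin d)))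
          (fun x => (M x.1.1 x.2.1 * M x.1.2 x.2.2) / (M x.1.2 x.2.1 * M x.1.1 x.2.2))
          (b := ((i,j),(k,l))) (mem_univ _)
      have h2 : M i k * M j l ≤ a * (M j k * M i l) := by
        rw [← hA2] at h1 ⊢
        exact (div_le_iff₀ (mul_pos (hM j k) (hM i l))).1 h1
      calc (M i k * q k) * (M j l * q l) = (M i k * M j l) * (q k * q l) := by ring
        _ ≤ (a * (M j k * M i l)) * (q k * q l) :=
            mul_le_mul_of_nonneg_right h2 (mul_pos (hq k) (hq l)).le
        _ = A^2 * ((M j k * q k) * (M i l * q l)) := by rw [hA2]; ring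
    have hmain := phiBound A β hA hβ (fun k => M i k * q k) (fun k => M j k * q k) z
      (fun k => mul_pos (hM i k) (hq k)) (fun k => mul_pos (hM j k) (hq k)) hz0 hzβ hcon
    have hqe : ∀ k, q k * Real.exp (z k) = p k * Real.exp (-c) := by
      intro k
      have : Real.exp (z k) = p k / q k * Real.exp (-c) := by
        rw [hz]
        simp only [hg]
        rw [show Real.log (p k) - Real.log (q k) - c = (Real.log (p k) - Real.log (q k)) + (-c) from by ring,
          Real.exp_add, Real.exp_sub, Real.exp_log (hp k), Real.exp_log (hq k)]
      rw [this]
      field_simp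
      exact mul_div_cancel_left₀ _ (hq k).ne'
    have hsum1 : (∑ k, (M i k * q k) * Real.exp (z k)) = M.mulVec p i * Real.exp (-c) := by
      rw [Matrix.mulVec, dotProduct, Finset.sum_mul]
      refine Finset.sum_congr rfl fun k _ => ?_
      rw [mul_assoc, hqe k]; ring
    have hsum1' : (∑ k, (M j k * q k) * Real.exp (z k)) = M.mulVec p j * Real.exp (-c) := by
      rw [Matrix.mulVec, dotProduct, Finset.sum_mul]
      refine Finset.sum_congr rfl fun k _ => ?_
      rw [mul_assoc, hqe k]; ring
    have hsum2 : (∑ k, M i k * q k) = M.mulVec q i := by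
      rw [Matrix.mulVec, dotProduct]
    have hsum2' : (∑ k, M j k * q k) = M.mulVec q j := by
      rw [Matrix.mulVec, dotProduct]
    rw [hsum1, hsum1', hsum2, hsum2'] at hmain
    rw [Real.log_mul (hMp i).ne' (Real.exp_ne_zero _),
      Real.log_mul (hMp j).ne' (Real.exp_ne_zero _)] at hmain
    simp only [hf]
    linarith
  -- conclude
  have hgoal : rhoBG (M.mulVec p) (M.mulVec q) = univ.sup' univ_nonempty f - univ.inf' univ_nonempty f := rfl
  rw [hgoal, birkhoffKappa, ← hadef, ← hAdef]
  rw [sub_le_iff_le_add]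
  apply Finset.sup'_le
  intro i _
  have h := Finset.le_inf' (univ_nonempty (α := Fin d')) f
    (a := f i - (A-1)/(A+1)*β) (fun j _ => by linarith [claim i j])
  linarith
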